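/- Intermediate primal estimate in the proof of Theorem 2.3 (equation (2.16)): Suppose (u, λ) ∈ V × L solves the continuous problem and (u_h, λ_h) ∈ V_h × Λ_h solves the stabilised discrete problem with the same right-hand side F. Then there exists a constant C > 0, depending only on the constants of the framework, such that for every ν_h ∈ Λ_h, setting η_h := u_h − π_F u and ζ_h := λ_h − ν_h, one has ‖η_h‖_{V_h} + s(ζ_h, ζ_h)^{1/2} ≤ C · ( ‖u − π_F u‖_V + ‖λ − ν_h‖_L + s(ν_h, ν_h)^{1/2} ). -/
import Mathlib

lemma semidef_cauchy_schwarz {L : Type*} [AddCommGroup L] [Module ℝ L]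
    (s : L →ₗ[ℝ] L →ₗ[ℝ] ℝ) (Λh : Submodule ℝ L)
    (hs_symm : ∀ x ∈ Λh, ∀ y ∈ Λh, s x y = s y x)
    (hs_pos : ∀ x ∈ Λh, 0 ≤ s x x)
    {x y : L} (hx : x ∈ Λh) (hy : y ∈ Λh) :
    |s x y| ≤ Real.sqrt (s x x) * Real.sqrt (s y y) := by
  have hq : ∀ t : ℝ, 0 ≤ s y y * (t * t) + (2 * s x y) * t + s x x := by
    intro t
    have h0 := hs_pos (x + t • y) (add_mem hx (Λh.smul_mem t hy))
    have hsym := hs_symm y hy x hx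
    simp only [map_add, map_smul, LinearMap.add_apply, LinearMap.smul_apply,
      smul_eq_mul] at h0
    rw [hsym] at h0; nlinarith [h0]
  have hd := discrim_le_zero hq
  have h1 : s x y ^ 2 ≤ s x x * s y y := by rw [discrim] at hd; nlinarith
  calc |s x y| = Real.sqrt (s x y ^ 2) := (Real.sqrt_sq_eq_abs _).symm
    _ ≤ Real.sqrt (s x x * s y y) := Real.sqrt_le_sqrt h1
    _ = Real.sqrt (s x x) * Real.sqrt (s y y) := Real.sqrt_mul (hs_pos x hx) _


set_option maxHeartbeats 1000000 in
/-- **Intermediate primal estimate in the proof of Theorem 2.3 (equation (2.16)).**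
With `η_h := u_h − π_F u` and `ζ_h := λ_h − ν_h`, one has
`‖η_h‖_{V_h} + s(ζ_h,ζ_h)^{1/2} ≤ C (‖u − π_F u‖_V + ‖λ − ν_h‖_L + s(ν_h,ν_h)^{1/2})`
for every `ν_h ∈ Λ_h`, with `C` depending only on the constants of the framework. -/
theorem intermediate_primal_estimate
    {V L : Type*} [NormedAddCommGroup V] [NormedSpace ℝ V]
    [NormedAddCommGroup L] [NormedSpace ℝ L]
    -- bilinear forms and their continuity
    (a : V →ₗ[ℝ] V →ₗ[ℝ] ℝ) (b : L →ₗ[ℝ] V →ₗ[ℝ] ℝ)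
    (Ma : ℝ) (hMa : 0 < Ma)
    (ha_cont : ∀ u v : V, |a u v| ≤ Ma * ‖u‖ * ‖v‖)
    (Mb : ℝ) (hMb : 0 < Mb)
    (hb_cont : ∀ (lam : L) (v : V), |b lam v| ≤ Mb * ‖lam‖ * ‖v‖)
    -- discrete subspaces
    (Vh : Submodule ℝ V) (Lh Λh : Submodule ℝ L)
    -- discrete norm on V_h
    (nVh : V → ℝ) (CV : ℝ) (hCV : 0 < CV)
    (hnVh_nonneg : ∀ v ∈ Vh, 0 ≤ nVh v)
    (hnVh_def : ∀ v ∈ Vh, nVh v = 0 → v = 0)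
    (hnVh_add : ∀ v ∈ Vh, ∀ w ∈ Vh, nVh (v + w) ≤ nVh v + nVh w)
    (hnVh_smul : ∀ (r : ℝ), ∀ v ∈ Vh, nVh (r • v) = |r| * nVh v)
    (hV_comp : ∀ v ∈ Vh, ‖v‖ ≤ CV * nVh v)
    -- discrete norm on L_h + Λ_h
    (nLh : L → ℝ)
    (hnLh_nonneg : ∀ x ∈ Lh ⊔ Λh, 0 ≤ nLh x)
    (hnLh_def : ∀ x ∈ Lh ⊔ Λh, nLh x = 0 → x = 0)
    (hnLh_add : ∀ x ∈ Lh ⊔ Λh, ∀ y ∈ Lh ⊔ Λh, nLh (x + y) ≤ nLh x + nLh y)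
    (hnLh_smul : ∀ (r : ℝ), ∀ x ∈ Lh ⊔ Λh, nLh (r • x) = |r| * nLh x)
    -- discrete continuities
    (ha_disc : ∀ u ∈ Vh, ∀ v ∈ Vh, |a u v| ≤ nVh u * nVh v)
    (hb_disc : ∀ lam ∈ Lh ⊔ Λh, ∀ v ∈ Vh, |b lam v| ≤ nLh lam * nVh v)
    -- Fortin operator
    (πF : V →ₗ[ℝ] V) (hπF_mem : ∀ v : V, πF v ∈ Vh)
    (hπF_orth : ∀ μ ∈ Lh, ∀ v : V, b μ (v - πF v) = 0)
    (CF : ℝ) (hCF : 0 < CF)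
    (hπF_stab : ∀ v : V, ‖πF v‖ ≤ CF * ‖v‖)
    -- stabilising projection π_L : Λ_h → L_h
    (πL : L →ₗ[ℝ] L) (hπL_mem : ∀ x ∈ Λh, πL x ∈ Lh)
    (Cπ : ℝ) (hCπ : 0 < Cπ)
    (hπL_cont : ∀ x ∈ Λh, ∀ v : V, |b (x - πL x) v| ≤ Cπ * nLh (x - πL x) * ‖v‖)
    -- stabilisation form
    (s : L →ₗ[ℝ] L →ₗ[ℝ] ℝ)
    (hs_symm : ∀ x ∈ Λh, ∀ y ∈ Λh, s x y = s y x)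
    (hs_pos : ∀ x ∈ Λh, 0 ≤ s x x)
    (Cs : ℝ) (hCs : 0 < Cs)
    (hs_stab : ∀ x ∈ Λh, nLh (x - πL x) ^ 2 ≤ Cs * s x x)
    -- coercivity assumption
    (ξh : V → L) (hξh_mem : ∀ u ∈ Vh, ξh u ∈ Λh)
    (αξ cs : ℝ) (hαξ : 0 < αξ) (hcs : 0 ≤ cs)
    (hcoer : ∀ u ∈ Vh, αξ * nVh u ^ 2 ≤ a u u + b (ξh u) u)
    (hξs : ∀ u ∈ Vh, Real.sqrt (s (ξh u) (ξh u)) ≤ cs * nVh u)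
    (hsmall : cs ^ 2 < 2 * αξ) :
    ∃ C > 0, ∀ (F : V →L[ℝ] ℝ) (u : V) (lam : L) (uh : V) (lamh : L),
      uh ∈ Vh → lamh ∈ Λh →
      -- continuous problem
      (∀ (v : V) (μ : L), a u v + b lam v + b μ u = F v) →
      -- stabilised discrete problem
      (∀ v ∈ Vh, ∀ μ ∈ Λh, a uh v + b lamh v + b μ uh - s lamh μ = F v) →
      ∀ ν ∈ Λh,
        nVh (uh - πF u) + Real.sqrt (s (lamh - ν) (lamh - ν)) ≤
          C * (‖u - πF u‖ + ‖lam - ν‖ + Real.sqrt (s ν ν)) := by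
  have hsqrtCs : (0:ℝ) ≤ Real.sqrt Cs := Real.sqrt_nonneg Cs
  set K0 : ℝ := Ma*CV + Mb*CV + 1 + Cπ*Real.sqrt Cs + cs + Cπ*Real.sqrt Cs*cs with hK0def
  have hK0 : 0 < K0 := by
    have h1 : 0 ≤ Cπ*Real.sqrt Cs := mul_nonneg hCπ.le hsqrtCs
    have h2 : 0 ≤ Cπ*Real.sqrt Cs*cs := mul_nonneg h1 hcs
    have h3 : 0 < Ma*CV := mul_pos hMa hCV
    have h4 : 0 < Mb*CV := mul_pos hMb hCV
    simp only [hK0def]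
    linarith only [h1, h2, h3, h4, hcs]
  set δ : ℝ := αξ - cs^2/2 with hδdef
  have hδ : 0 < δ := by simp only [hδdef]; linarith only [hsmall]
  set m : ℝ := min δ (1/2) with hmdef
  have hm : 0 < m := lt_min hδ (by norm_num)
  refine ⟨2*K0/m, div_pos (by linarith only [hK0]) hm, ?_⟩
  intro F u lam uh lamh huh hlamh hcont hdisc ν hν
  -- consequences of the continuous problem
  have hbu : ∀ μ : L, b μ u = 0 := by
    intro μ
    have h := hcont 0 μ
    simpa using h
  have hc1 : ∀ v : V, a u v + b lam v = F v := by
    intro v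
    have h := hcont v 0
    simpa using h
  -- consequences of the discrete problem
  have hd1 : ∀ v ∈ Vh, a uh v + b lamh v = F v := by
    intro v hv
    have h := hdisc v hv 0 (Submodule.zero_mem Λh)
    simpa using h
  have hd2 : ∀ μ ∈ Λh, b μ uh = s lamh μ := by
    intro μ hμ
    have h := hdisc 0 (Submodule.zero_mem Vh) μ hμ
    simp only [map_zero, LinearMap.zero_apply] at h
    linarith only [h]
  set η : V := uh - πF u with hηdef
  set ζ : L := lamh - ν with hζdef
  have hη : η ∈ Vh := sub_mem huh (hπF_mem u)
  have hζ : ζ ∈ Λh := sub_mem hlamh hν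
  set e : V := u - πF u with hedef
  set w : V := πF u - u with hwdef
  -- error equation E1
  have E1 : ∀ v ∈ Vh, a η v + b ζ v = a e v + b (lam - ν) v := by
    intro v hv
    have h1 := hd1 v hv
    have h2 := hc1 v
    simp only [hηdef, hζdef, hedef, map_sub, LinearMap.sub_apply]
    linarith only [h1, h2]
  -- error equation E2
  have E2 : ∀ μ ∈ Λh, b μ η = s lamh μ - b (μ - πL μ) w := by
    intro μ hμ
    have hp : πL μ ∈ Lh := hπL_mem μ hμ
    have ho := hπF_orth (πL μ) hp u
    have hbpu : b (πL μ) u = 0 := hbu (πL μ)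
    have hbmu : b μ u = 0 := hbu μ
    have h2 := hd2 μ hμ
    simp only [map_sub] at ho
    simp only [hηdef, hwdef, map_sub, LinearMap.sub_apply]
    linarith only [ho, hbpu, hbmu, h2]
  -- abbreviations
  set N : ℝ := nVh η with hNdef
  set S : ℝ := Real.sqrt (s ζ ζ) with hSdef
  set E : ℝ := ‖e‖ with hEdef
  set Λn : ℝ := ‖lam - ν‖ with hΛdef
  set Sν : ℝ := Real.sqrt (s ν ν) with hSνdef
  set Xi : L := ξh η with hXidef
  have hXimem : Xi ∈ Λh := hξh_mem η hη
  have hN0 : 0 ≤ N := hnVh_nonneg η hη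
  have hS0 : 0 ≤ S := Real.sqrt_nonneg _
  have hE0 : 0 ≤ E := norm_nonneg _
  have hΛ0 : 0 ≤ Λn := norm_nonneg _
  have hSν0 : 0 ≤ Sν := Real.sqrt_nonneg _
  have hS2 : S^2 = s ζ ζ := Real.sq_sqrt (hs_pos ζ hζ)
  have hwE : ‖w‖ = E := by rw [hEdef, hwdef, hedef, norm_sub_rev]
  have hSX : Real.sqrt (s Xi Xi) ≤ cs * N := hξs η hη
  -- key identity
  have keyId : a η η + b Xi η + s ζ ζ =
      a e η + b (lam - ν) η - s ν ζ + b (ζ - πL ζ) w + s ζ Xi + s ν Xi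
        - b (Xi - πL Xi) w := by
    have h1 := E1 η hη
    have h2 := E2 ζ hζ
    have h3 := E2 Xi hXimem
    have hl1 : s lamh ζ = s ζ ζ + s ν ζ := by
      have hlz : lamh = ζ + ν := by rw [hζdef]; abel
      rw [hlz, map_add, LinearMap.add_apply]
    have hl2 : s lamh Xi = s ζ Xi + s ν Xi := by
      have hlz : lamh = ζ + ν := by rw [hζdef]; abel
      rw [hlz, map_add, LinearMap.add_apply]
    rw [hl1] at h2; rw [hl2] at h3
    linarith only [h1, h2, h3]
  -- stabilisation-norm bounds
  have hsupζ : ζ - πL ζ ∈ Lh ⊔ Λh :=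
    sub_mem (Submodule.mem_sup_right hζ) (Submodule.mem_sup_left (hπL_mem ζ hζ))
  have hsupX : Xi - πL Xi ∈ Lh ⊔ Λh :=
    sub_mem (Submodule.mem_sup_right hXimem)
      (Submodule.mem_sup_left (hπL_mem Xi hXimem))
  have hnζ : nLh (ζ - πL ζ) ≤ Real.sqrt Cs * S := by
    have hnn := hnLh_nonneg _ hsupζ
    calc nLh (ζ - πL ζ) = Real.sqrt (nLh (ζ - πL ζ) ^ 2) := (Real.sqrt_sq hnn).symm
      _ ≤ Real.sqrt (Cs * s ζ ζ) := Real.sqrt_le_sqrt (hs_stab ζ hζ)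
      _ = Real.sqrt Cs * S := by rw [Real.sqrt_mul hCs.le, hSdef]
  have hnX : nLh (Xi - πL Xi) ≤ Real.sqrt Cs * (cs * N) := by
    have hnn := hnLh_nonneg _ hsupX
    calc nLh (Xi - πL Xi) = Real.sqrt (nLh (Xi - πL Xi) ^ 2) := (Real.sqrt_sq hnn).symm
      _ ≤ Real.sqrt (Cs * s Xi Xi) := Real.sqrt_le_sqrt (hs_stab Xi hXimem)
      _ = Real.sqrt Cs * Real.sqrt (s Xi Xi) := Real.sqrt_mul hCs.le _
      _ ≤ Real.sqrt Cs * (cs * N) := mul_le_mul_of_nonneg_left hSX hsqrtCs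
  -- term bounds
  have hηnorm : ‖η‖ ≤ CV * N := hV_comp η hη
  have t1 : a e η ≤ Ma * CV * (E * N) := by
    have h1 : a e η ≤ Ma * ‖e‖ * ‖η‖ := (le_abs_self _).trans (ha_cont e η)
    have h2 : Ma * ‖e‖ * ‖η‖ ≤ Ma * ‖e‖ * (CV * N) :=
      mul_le_mul_of_nonneg_left hηnorm (by positivity)
    have h3 : Ma * ‖e‖ * (CV * N) = Ma * CV * (E * N) := by rw [hEdef]; ring
    linarith only [h1, h2, h3]
  have t2 : b (lam - ν) η ≤ Mb * CV * (Λn * N) := by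
    have h1 : b (lam - ν) η ≤ Mb * ‖lam - ν‖ * ‖η‖ :=
      (le_abs_self _).trans (hb_cont (lam - ν) η)
    have h2 : Mb * ‖lam - ν‖ * ‖η‖ ≤ Mb * ‖lam - ν‖ * (CV * N) :=
      mul_le_mul_of_nonneg_left hηnorm (by positivity)
    have h3 : Mb * ‖lam - ν‖ * (CV * N) = Mb * CV * (Λn * N) := by rw [hΛdef]; ring
    linarith only [h1, h2, h3]
  have t3 : -(s ν ζ) ≤ Sν * S := by
    have h := semidef_cauchy_schwarz s Λh hs_symm hs_pos hν hζ
    rw [hSνdef, hSdef]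
    linarith only [h, neg_le_abs (s ν ζ)]
  have t4 : b (ζ - πL ζ) w ≤ Cπ * (Real.sqrt Cs * S) * E := by
    have h1 : b (ζ - πL ζ) w ≤ Cπ * nLh (ζ - πL ζ) * ‖w‖ :=
      (le_abs_self _).trans (hπL_cont ζ hζ w)
    rw [hwE] at h1
    have h2 : Cπ * nLh (ζ - πL ζ) * E ≤ Cπ * (Real.sqrt Cs * S) * E :=
      mul_le_mul_of_nonneg_right (mul_le_mul_of_nonneg_left hnζ hCπ.le) hE0
    linarith only [h1, h2]
  have t5 : s ζ Xi ≤ S * (cs * N) := by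
    have h := semidef_cauchy_schwarz s Λh hs_symm hs_pos hζ hXimem
    have h2 : Real.sqrt (s ζ ζ) * Real.sqrt (s Xi Xi) ≤ Real.sqrt (s ζ ζ) * (cs * N) :=
      mul_le_mul_of_nonneg_left hSX (Real.sqrt_nonneg _)
    rw [hSdef]
    linarith only [le_abs_self (s ζ Xi), h, h2]
  have t6 : s ν Xi ≤ Sν * (cs * N) := by
    have h := semidef_cauchy_schwarz s Λh hs_symm hs_pos hν hXimem
    have h2 : Real.sqrt (s ν ν) * Real.sqrt (s Xi Xi) ≤ Real.sqrt (s ν ν) * (cs * N) :=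
      mul_le_mul_of_nonneg_left hSX (Real.sqrt_nonneg _)
    rw [hSνdef]
    linarith only [le_abs_self (s ν Xi), h, h2]
  have t7 : -(b (Xi - πL Xi) w) ≤ Cπ * (Real.sqrt Cs * (cs * N)) * E := by
    have h1 := hπL_cont Xi hXimem w
    rw [hwE] at h1
    have h2 : Cπ * nLh (Xi - πL Xi) * E ≤ Cπ * (Real.sqrt Cs * (cs * N)) * E :=
      mul_le_mul_of_nonneg_right (mul_le_mul_of_nonneg_left hnX hCπ.le) hE0
    linarith only [neg_le_abs (b (Xi - πL Xi) w), h1, h2]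
  -- coercivity
  have hco := hcoer η hη
  have hbig : αξ * N^2 + S^2 ≤
      Ma * CV * (E * N) + Mb * CV * (Λn * N) + Sν * S + Cπ * (Real.sqrt Cs * S) * E
        + S * (cs * N) + Sν * (cs * N) + Cπ * (Real.sqrt Cs * (cs * N)) * E := by
    rw [hS2]
    linarith only [keyId, hco, t1, t2, t3, t4, t5, t6, t7]
  -- Young on the S·N term
  have young : S * (cs * N) ≤ cs^2/2 * N^2 + S^2/2 := by
    linarith only [sq_nonneg (cs*N - S)]
  -- products vs R := E + Λn + Sν
  set R : ℝ := E + Λn + Sν with hRdef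
  have hR0 : 0 ≤ R := by simp only [hRdef]; linarith only [hE0, hΛ0, hSν0]
  have hNle : N ≤ N + S := by linarith only [hS0]
  have hSle : S ≤ N + S := by linarith only [hN0]
  have hNS0 : 0 ≤ N + S := by linarith only [hN0, hS0]
  have hER : E ≤ R := by simp only [hRdef]; linarith only [hΛ0, hSν0]
  have hΛR : Λn ≤ R := by simp only [hRdef]; linarith only [hE0, hSν0]
  have hSνR : Sν ≤ R := by simp only [hRdef]; linarith only [hE0, hΛ0]
  have pEN : E * N ≤ R * (N + S) := mul_le_mul hER hNle hN0 hR0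
  have pΛN : Λn * N ≤ R * (N + S) := mul_le_mul hΛR hNle hN0 hR0
  have pSνS : Sν * S ≤ R * (N + S) := mul_le_mul hSνR hSle hS0 hR0
  have pSE : S * E ≤ R * (N + S) := by
    rw [mul_comm]; exact mul_le_mul hER hSle hS0 hR0
  have pSνN : Sν * N ≤ R * (N + S) := mul_le_mul hSνR hNle hN0 hR0
  -- scaled versions
  have q1 : Ma * CV * (E * N) ≤ Ma * CV * (R * (N + S)) :=
    mul_le_mul_of_nonneg_left pEN (by positivity)
  have q2 : Mb * CV * (Λn * N) ≤ Mb * CV * (R * (N + S)) :=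
    mul_le_mul_of_nonneg_left pΛN (by positivity)
  have q3 : Cπ * (Real.sqrt Cs * S) * E ≤ Cπ * Real.sqrt Cs * (R * (N + S)) := by
    calc Cπ * (Real.sqrt Cs * S) * E = Cπ * Real.sqrt Cs * (S * E) := by ring
      _ ≤ Cπ * Real.sqrt Cs * (R * (N + S)) :=
        mul_le_mul_of_nonneg_left pSE (by positivity)
  have q6 : Sν * (cs * N) ≤ cs * (R * (N + S)) := by
    calc Sν * (cs * N) = cs * (Sν * N) := by ring
      _ ≤ cs * (R * (N + S)) := mul_le_mul_of_nonneg_left pSνN hcs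
  have q7 : Cπ * (Real.sqrt Cs * (cs * N)) * E ≤
      Cπ * Real.sqrt Cs * cs * (R * (N + S)) := by
    calc Cπ * (Real.sqrt Cs * (cs * N)) * E
        = Cπ * Real.sqrt Cs * cs * (E * N) := by ring
      _ ≤ Cπ * Real.sqrt Cs * cs * (R * (N + S)) :=
        mul_le_mul_of_nonneg_left pEN (by positivity)
  have hm1 : m ≤ δ := by rw [hmdef]; exact min_le_left _ _
  have hm2 : m ≤ 1/2 := by rw [hmdef]; exact min_le_right _ _
  clear_value K0 δ m N S E Λn Sν R
  have H2 : δ * N^2 + S^2/2 ≤ K0 * (R * (N + S)) := by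
    simp only [hδdef, hK0def]
    linarith only [hbig, young, q1, q2, pSνS, q3, q6, q7]
  have H3 : m * (N + S)^2 ≤ 2 * K0 * (R * (N + S)) := by
    linarith only [H2, mul_nonneg hm.le (sq_nonneg (N - S)),
      mul_nonneg (sub_nonneg.2 hm1) (sq_nonneg N),
      mul_nonneg (sub_nonneg.2 hm2) (sq_nonneg S)]
  -- conclude
  rcases eq_or_lt_of_le hNS0 with heq | hpos'
  · have h0 : 0 ≤ 2*K0/m * R :=
      mul_nonneg (div_nonneg (by linarith only [hK0]) hm.le) hR0
    linarith only [h0, heq]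
  · have h4 : m * (N + S) ≤ 2 * K0 * R := by
      by_contra hc
      push_neg at hc
      have hgt := mul_lt_mul_of_pos_right hc hpos'
      linarith only [H3, hgt]
    rw [div_mul_eq_mul_div, le_div_iff₀ hm]
    linarith only [h4]
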